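/- Let M : H → H be continuous and monotone, ε : [t₀,∞) → (0,∞) continuously differentiable, and x a solution of the Tikhonov-regularized flow ẋ(t) + M(x(t)) + ε(t)x(t) = 0 with x(t₀) = x₀. For ξ ∈ Zer M define φ_ξ(t) := (1/2)‖x(t) − ξ‖². Then for almost every t ≥ t₀: φ̇_ξ(t) + 2ε(t)φ_ξ(t) ≤ −ε(t)⟨x(t) − ξ, ξ⟩ ≤ ε(t)φ_ξ(t) + (ε(t)/2)‖ξ‖², and consequently ‖x(t) − ξ‖ ≤ max{‖x₀ − ξ‖, ‖ξ‖} for every t ≥ t₀, so the trajectory is bounded. -/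

import Mathlib

theorem stmt19 {H : Type*} [NormedAddCommGroup H] [InnerProductSpace ℝ H]
    (M : H → H) (hMc : Continuous M)
    (hM : ∀ x y : H, 0 ≤ (inner ℝ (M x - M y) (x - y) : ℝ))
    (t₀ : ℝ) (ε : ℝ → ℝ) (hεpos : ∀ t, t₀ ≤ t → 0 < ε t) (hε : ContDiff ℝ 1 ε)
    (x₀ : H) (x : ℝ → H) (hx0 : x t₀ = x₀)
    (hx : ∀ t, t₀ ≤ t → HasDerivAt x (-(M (x t)) - ε t • x t) t)
    (ξ : H) (hξ : M ξ = 0) :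
    (∀ t, t₀ ≤ t →
      deriv (fun s => (1/2 : ℝ) * ‖x s - ξ‖^2) t + 2 * ε t * ((1/2) * ‖x t - ξ‖^2)
          ≤ -(ε t) * (inner ℝ (x t - ξ) ξ : ℝ) ∧
      -(ε t) * (inner ℝ (x t - ξ) ξ : ℝ) ≤ ε t * ((1/2) * ‖x t - ξ‖^2) + (ε t / 2) * ‖ξ‖^2) ∧
    (∀ t, t₀ ≤ t → ‖x t - ξ‖ ≤ max ‖x₀ - ξ‖ ‖ξ‖) := by
  have hφd : ∀ t, t₀ ≤ t →
      HasDerivAt (fun s => (1/2 : ℝ) * ‖x s - ξ‖^2)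
        (inner ℝ (-(M (x t)) - ε t • x t) (x t - ξ) : ℝ) t := by
    intro t ht
    have h1 : HasDerivAt (fun s => x s - ξ) (-(M (x t)) - ε t • x t) t := (hx t ht).sub_const ξ
    have h2 := (h1.inner ℝ h1).const_mul (1/2 : ℝ)
    simp only [real_inner_self_eq_norm_sq] at h2
    refine h2.congr_deriv ?_
    rw [real_inner_comm]; ring
  -- Part 1 inequalities
  have part1 : ∀ t, t₀ ≤ t →
      deriv (fun s => (1/2 : ℝ) * ‖x s - ξ‖^2) t + 2 * ε t * ((1/2) * ‖x t - ξ‖^2)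
          ≤ -(ε t) * (inner ℝ (x t - ξ) ξ : ℝ) ∧
      -(ε t) * (inner ℝ (x t - ξ) ξ : ℝ) ≤ ε t * ((1/2) * ‖x t - ξ‖^2) + (ε t / 2) * ‖ξ‖^2 := by
    intro t ht
    have hd := (hφd t ht).deriv
    have hmon : (0:ℝ) ≤ inner ℝ (M (x t)) (x t - ξ) := by
      have := hM (x t) ξ; rwa [hξ, sub_zero] at this
    have hexp : (inner ℝ (-(M (x t)) - ε t • x t) (x t - ξ) : ℝ)
        = -(inner ℝ (M (x t)) (x t - ξ) : ℝ)
          - ε t * (‖x t - ξ‖^2 + (inner ℝ (x t - ξ) ξ : ℝ)) := by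
      rw [inner_sub_left, inner_neg_left, real_inner_smul_left]
      have hx' : x t = (x t - ξ) + ξ := by abel
      have : (inner ℝ (x t) (x t - ξ) : ℝ) = ‖x t - ξ‖^2 + (inner ℝ (x t - ξ) ξ : ℝ) := by
        nth_rewrite 1 [hx']
        rw [inner_add_left, real_inner_self_eq_norm_sq]
        exact congrArg _ (real_inner_comm _ ξ)
      rw [this]
    constructor
    · rw [hd, hexp]
      have hε' := (hεpos t ht).le
      nlinarith [hmon, hεpos t ht]
    · have hcs : |(inner ℝ (x t - ξ) ξ : ℝ)| ≤ ‖x t - ξ‖ * ‖ξ‖ := abs_real_inner_le_norm _ _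
      have h1 := neg_abs_le (inner ℝ (x t - ξ) ξ : ℝ)
      have hε' := (hεpos t ht).le
      nlinarith [sq_nonneg (‖x t - ξ‖ - ‖ξ‖), abs_nonneg (inner ℝ (x t - ξ) ξ : ℝ)]
  refine ⟨part1, ?_⟩
  -- Part 2 : boundedness via Lyapunov function h(t) = γ(t) * (φ(t) - ‖ξ‖²/2)
  set c : ℝ := (1/2) * ‖ξ‖^2 with hc
  set G : ℝ → ℝ := fun s => ∫ u in t₀..s, ε u with hG
  have hεc : Continuous ε := hε.continuous
  have hGd : ∀ t, HasDerivAt G (ε t) t := fun t =>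
    intervalIntegral.integral_hasDerivAt_right (hεc.intervalIntegrable _ _)
      (hεc.stronglyMeasurableAtFilter _ _) hεc.continuousAt
  set γ : ℝ → ℝ := fun s => Real.exp (G s) with hγ
  have hγd : ∀ t, HasDerivAt γ (ε t * γ t) t := by
    intro t
    have := (hGd t).exp
    simpa [hγ, mul_comm] using this
  have hγpos : ∀ t, 0 < γ t := fun t => Real.exp_pos _
  have hγ1 : ∀ t, t₀ ≤ t → 1 ≤ γ t := by
    intro t ht
    have : 0 ≤ G t := by
      apply intervalIntegral.integral_nonneg ht
      intro u hu; exact (hεpos u hu.1).le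
    simpa [hγ] using Real.exp_le_exp.mpr this
  set h : ℝ → ℝ := fun s => γ s * ((1/2 : ℝ) * ‖x s - ξ‖^2 - c) with hh
  have hhd : ∀ t, t₀ ≤ t → HasDerivAt h
      (ε t * γ t * ((1/2 : ℝ) * ‖x t - ξ‖^2 - c)
        + γ t * (inner ℝ (-(M (x t)) - ε t • x t) (x t - ξ) : ℝ)) t := by
    intro t ht
    exact (hγd t).mul ((hφd t ht).sub_const c)
  have hanti : AntitoneOn h (Set.Ici t₀) := by
    apply antitoneOn_of_deriv_nonpos (convex_Ici t₀)
    · intro t ht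
      exact ((hγd t).mul ((hφd t ht).sub_const c)).continuousAt.continuousWithinAt
    · intro t ht
      rw [interior_Ici] at ht
      exact (hhd t ht.le).differentiableAt.differentiableWithinAt
    · intro t ht
      rw [interior_Ici] at ht
      have ht' := (Set.mem_Ioi.mp ht).le
      rw [(hhd t ht').deriv]
      have hkey : (inner ℝ (-(M (x t)) - ε t • x t) (x t - ξ) : ℝ)
          ≤ -(ε t) * ((1/2 : ℝ) * ‖x t - ξ‖^2 - c) := by
        have h1 := (part1 t ht').1
        have h2 := (part1 t ht').2
        rw [(hφd t ht').deriv] at h1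
        simp only [hc]
        nlinarith
      have := hγpos t
      nlinarith [mul_le_mul_of_nonneg_left hkey (hγpos t).le]
  intro t ht
  have hht : h t ≤ h t₀ := hanti Set.self_mem_Ici ht ht
  have hht0 : h t₀ = (1/2 : ℝ) * ‖x₀ - ξ‖^2 - c := by
    simp [hh, hγ, hG, hx0]
  -- φ t ≤ max (φ t₀) c
  have hφle : (1/2 : ℝ) * ‖x t - ξ‖^2 ≤ max ((1/2 : ℝ) * ‖x₀ - ξ‖^2) c := by
    rcases le_or_gt ((1/2 : ℝ) * ‖x t - ξ‖^2) c with hle | hgt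
    · exact hle.trans (le_max_right _ _)
    · have hpos : 0 < (1/2 : ℝ) * ‖x t - ξ‖^2 - c := by linarith
      have hγt := hγ1 t ht
      have : (1/2 : ℝ) * ‖x t - ξ‖^2 - c ≤ γ t * ((1/2 : ℝ) * ‖x t - ξ‖^2 - c) := by
        nlinarith
      have : (1/2 : ℝ) * ‖x t - ξ‖^2 - c ≤ (1/2 : ℝ) * ‖x₀ - ξ‖^2 - c := by
        calc (1/2 : ℝ) * ‖x t - ξ‖^2 - c ≤ h t := this
        _ ≤ h t₀ := hht
        _ = _ := hht0
      linarith [le_max_left ((1/2 : ℝ) * ‖x₀ - ξ‖^2) c]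
  have hmax0 : 0 ≤ max ‖x₀ - ξ‖ ‖ξ‖ := le_max_of_le_left (norm_nonneg _)
  have hsq : ‖x t - ξ‖^2 ≤ (max ‖x₀ - ξ‖ ‖ξ‖)^2 := by
    rcases max_cases ((1/2 : ℝ) * ‖x₀ - ξ‖^2) c with ⟨heq, _⟩ | ⟨heq, _⟩ <;>
      rw [heq] at hφle
    · nlinarith [le_max_left ‖x₀ - ξ‖ ‖ξ‖, norm_nonneg (x₀ - ξ), hmax0]
    · simp only [hc] at hφle
      nlinarith [le_max_right ‖x₀ - ξ‖ ‖ξ‖, norm_nonneg ξ, hmax0]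
  nlinarith [norm_nonneg (x t - ξ), hmax0]
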